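/- Descending property of the damped Gauss–Newton iteration: for 0 < α ≤ 1, if ‖G((DF(q₀ + tαΔq) − DF(q₀))(Δq))‖ ≤ ω·t·α·‖Δq‖² for all t ∈ [0,1] with some ω ≥ 0, and additionally α·ω·‖Δq‖ ≤ 2 (in particular whenever α ≤ min(1, η/(ω‖Δq‖)) for some η ∈ (0,2]), then L(q₀ + αΔq) ≤ L(q₀). -/

import Mathlib

/-- Descending property of the damped Gauss–Newton iteration: under the
nonlinearity bound and the damping condition `α·ω·‖Δq‖ ≤ 2` (in particular for
`α ≤ min(1, η/(ω‖Δq‖))` with `η ∈ (0,2]`), the natural level function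
`L(q) = ½‖G(F(q))‖²` decreases: `L(q₀ + αΔq) ≤ L(q₀)`. -/
theorem gauss_newton_descending_property
    (n m : ℕ) (hn : 0 < n) (hm : 0 < m)
    (F : EuclideanSpace ℝ (Fin n) → EuclideanSpace ℝ (Fin m))
    (hF : ContDiff ℝ 1 F)
    (q₀ : EuclideanSpace ℝ (Fin n))
    (G : EuclideanSpace ℝ (Fin m) →L[ℝ] EuclideanSpace ℝ (Fin n))
    (hG : G.comp (fderiv ℝ F q₀) = ContinuousLinearMap.id ℝ (EuclideanSpace ℝ (Fin n)))
    (Δq : EuclideanSpace ℝ (Fin n)) (hΔq : Δq = -(G (F q₀)))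
    (L : EuclideanSpace ℝ (Fin n) → ℝ)
    (hL : ∀ q, L q = (1 / 2) * ‖G (F q)‖ ^ 2)
    (α : ℝ) (hα₀ : 0 < α) (hα₁ : α ≤ 1)
    (ω : ℝ) (hω : 0 ≤ ω)
    (hbound : ∀ t ∈ Set.Icc (0 : ℝ) 1,
      ‖G ((fderiv ℝ F (q₀ + (t * α) • Δq) - fderiv ℝ F q₀) Δq)‖ ≤
        ω * t * α * ‖Δq‖ ^ 2)
    (hdamp : α * ω * ‖Δq‖ ≤ 2) :
    L (q₀ + α • Δq) ≤ L q₀ := by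
  have hGid : ∀ x, G (fderiv ℝ F q₀ x) = x := fun x => congrArg (fun T => T x) hG
  set v : EuclideanSpace ℝ (Fin n) := α • Δq with hv
  set c : ℝ → EuclideanSpace ℝ (Fin n) := fun t => q₀ + t • v with hc
  set φ : ℝ → EuclideanSpace ℝ (Fin n) := fun t => G (F (c t)) - t • v with hφ
  have hct : ∀ t, c t = q₀ + (t * α) • Δq := by
    intro t; simp [hc, hv, smul_smul]
  have hder : ∀ t : ℝ,
      HasDerivAt φ (α • (G ((fderiv ℝ F (c t) - fderiv ℝ F q₀) Δq))) t := by
    intro t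
    have hcd : HasDerivAt c v t := by
      simpa only [one_smul] using ((hasDerivAt_id' t).smul_const v).const_add q₀
    have hFc : HasDerivAt (fun s => F (c s)) (fderiv ℝ F (c t) v) t :=
      ((hF.differentiable one_ne_zero (c t)).hasFDerivAt.comp_hasDerivAt t hcd)
    have hGFc : HasDerivAt (fun s => G (F (c s))) (G (fderiv ℝ F (c t) v)) t :=
      G.hasFDerivAt.comp_hasDerivAt t hFc
    have hlin : HasDerivAt (fun s : ℝ => s • v) v t := by
      simpa using (hasDerivAt_id t).smul_const v
    have h := hGFc.sub hlin
    refine h.congr_deriv ?_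
    have h1 : (fderiv ℝ F (c t)) v = α • (fderiv ℝ F (c t)) Δq := by
      rw [hv, map_smul]
    have h2 : v = α • G ((fderiv ℝ F q₀) Δq) := by rw [hGid, hv]
    rw [h1, h2, map_smul, ContinuousLinearMap.sub_apply, map_sub, smul_sub]
  set K : ℝ := ω * α ^ 2 * ‖Δq‖ ^ 2 with hK
  have hK0 : 0 ≤ K := by positivity
  have hbd : ∀ x ∈ Set.Ico (0:ℝ) 1,
      ‖α • (G ((fderiv ℝ F (c x) - fderiv ℝ F q₀) Δq))‖ ≤ K * x := by
    intro x hx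
    rw [norm_smul, Real.norm_eq_abs, abs_of_pos hα₀, hct]
    have := hbound x ⟨hx.1, le_of_lt hx.2⟩
    calc α * ‖G ((fderiv ℝ F (q₀ + (x * α) • Δq) - fderiv ℝ F q₀) Δq)‖
        ≤ α * (ω * x * α * ‖Δq‖ ^ 2) := by
          exact mul_le_mul_of_nonneg_left this (le_of_lt hα₀)
      _ = K * x := by rw [hK]; ring
  -- apply the boundary MVT to f t = φ t - φ 0, B t = K/2 * t^2
  have key : ‖φ 1 - φ 0‖ ≤ K / 2 := by
    have hf : ContinuousOn (fun t => φ t - φ 0) (Set.Icc (0:ℝ) 1) :=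
      fun t _ => ((hder t).sub_const (φ 0)).continuousAt.continuousWithinAt
    have hf' : ∀ x ∈ Set.Ico (0:ℝ) 1, HasDerivWithinAt (fun t => φ t - φ 0)
        (α • (G ((fderiv ℝ F (c x) - fderiv ℝ F q₀) Δq))) (Set.Ici x) x :=
      fun x _ => ((hder x).sub_const (φ 0)).hasDerivWithinAt
    have ha : ‖φ 0 - φ 0‖ ≤ K / 2 * (0:ℝ) ^ 2 := by simp
    have hB : ContinuousOn (fun t : ℝ => K / 2 * t ^ 2) (Set.Icc (0:ℝ) 1) :=
      (continuous_const.mul (continuous_pow 2)).continuousOn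
    have hB' : ∀ x ∈ Set.Ico (0:ℝ) 1,
        HasDerivWithinAt (fun t : ℝ => K / 2 * t ^ 2) (K * x) (Set.Ici x) x := by
      intro x _
      have h1 : HasDerivAt (fun t : ℝ => K / 2 * t ^ 2) (K * x) x := by
        have := (hasDerivAt_pow 2 x).const_mul (K / 2)
        refine this.congr_deriv ?_; push_cast; ring
      exact h1.hasDerivWithinAt
    have main := image_norm_le_of_norm_deriv_right_le_deriv_boundary' hf hf' ha hB hB' hbd
    have := main (Set.mem_Icc.2 ⟨zero_le_one, le_rfl⟩)
    simpa using this
  have hφ0 : φ 0 = -Δq := by simp [hφ, hc, hΔq]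
  have hφ1 : φ 1 = G (F (q₀ + α • Δq)) - α • Δq := by simp [hφ, hc, hv]
  have hnorm : ‖G (F (q₀ + α • Δq))‖ ≤ K / 2 + (1 - α) * ‖Δq‖ := by
    have heq : G (F (q₀ + α • Δq)) = (φ 1 - φ 0) + (α - 1) • Δq := by
      rw [hφ1, hφ0]; module
    rw [heq]
    refine le_trans (norm_add_le _ _) ?_
    have : ‖(α - 1) • Δq‖ = (1 - α) * ‖Δq‖ := by
      rw [norm_smul, Real.norm_eq_abs, abs_of_nonpos (by linarith), neg_sub]
    rw [this]
    exact add_le_add_left key _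
  have hK2 : K / 2 ≤ α * ‖Δq‖ := by
    have h0 : (0:ℝ) ≤ α * ‖Δq‖ := by positivity
    nlinarith [norm_nonneg Δq]
  have hfin : ‖G (F (q₀ + α • Δq))‖ ≤ ‖G (F q₀)‖ := by
    have hn1 : ‖G (F q₀)‖ = ‖Δq‖ := by rw [hΔq, norm_neg]
    rw [hn1]; linarith
  rw [hL, hL]
  have := pow_le_pow_left₀ (norm_nonneg _) hfin 2
  linarith
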